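/- Let K be a field of characteristic ≠ 2, t ∈ K∖{0}, and suppose y ∈ K satisfies y⁴ - y³ + 4ty² - 4ty + t = 0 with y ∉ {0, 1, 1/2}, and set x = y²/(1 - 2y). Then applying the s = -1 q-Painlevé I map twice returns (x, y, t) to itself: with x̄ = t/(x + y), ȳ = -x/y, t̄ = -t, the second iterate (x̿, y̿, t̿) equals (x, y, t). -/

import Mathlib

/-- If y⁴ - y³ + 4ty² - 4ty + t = 0 with y ∉ {0, 1, 1/2} and
x = y²/(1-2y), then (x,y,t) is a period-2 point of the s = -1 q-Painlevé I map
x̄ = t/(x+y), ȳ = -x/y, t̄ = -t (assuming the second-step denominator is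
nonzero). -/
theorem qP1_algebraic_solution_s_neg_one {K : Type*} [Field K]
    (hchar : (2 : K) ≠ 0)
    (t y : K) (ht : t ≠ 0) (hy0 : y ≠ 0) (hy1 : y ≠ 1) (hy2 : 1 - 2 * y ≠ 0)
    (hquartic : y^4 - y^3 + 4*t*y^2 - 4*t*y + t = 0)
    (x : K) (hx : x = y^2 / (1 - 2*y))
    (hden : t / (x + y) + (-x / y) ≠ 0) :
    -t / (t / (x + y) + (-x / y)) = x ∧
    -(t / (x + y)) / (-x / y) = y := by
  subst hx
  have hy1' : 1 - y ≠ 0 := sub_ne_zero.mpr (fun h => hy1 h.symm)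
  have hy2' : (1:K) - y*2 ≠ 0 := by rwa [mul_comm]
  have h3 : y + (1 - y*2) ≠ 0 := by intro h; exact hy1' (by linear_combination h)
  have key : t * (1 - 2*y)^2 = y^3 * (1 - y) := by linear_combination hquartic
  have hxy : y^2 / (1 - 2*y) + y = y * (1 - y) / (1 - 2*y) := by field_simp [hy2']; ring
  have hxy0 : y^2 / (1 - 2*y) + y ≠ 0 := by
    rw [hxy]; exact div_ne_zero (mul_ne_zero hy0 hy1') hy2
  have hx0 : -(y^2 / (1 - 2*y)) / y ≠ 0 :=
    div_ne_zero (neg_ne_zero.mpr (div_ne_zero (pow_ne_zero 2 hy0) hy2)) hy0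
  have hd : y^2 + y*(1-2*y) ≠ 0 := by
    intro h; exact mul_ne_zero hy0 hy1' (by linear_combination h)
  constructor
  · rw [div_eq_iff hden]
    field_simp [hd, hy2', hy1', h3]
    linear_combination (-1)*key
  · rw [div_eq_iff hx0]
    field_simp [hd, hy2', hy1', h3]
    linear_combination (-1)*key
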